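/- For any integer s, the map ρ⋆_s : g → gl(V*) defined by ρ⋆_s(x)(ξ) = ρ*(φ^s(x))((β⁻²)*(ξ)) is a representation of the regular Hom-Lie algebra (g,[·,·],φ) on V* with respect to (β⁻¹)*, where (V,β,ρ) is a representation of g with β invertible. -/

import Mathlib

open LinearMap Module

/-- A (regular, i.e. multiplicative with invertible structure map) Hom-Lie algebra. -/
structure HomLieAlgebra (K g : Type*) [Field K] [AddCommGroup g] [Module K g] where
  bracket : g →ₗ[K] g →ₗ[K] g
  phi : g ≃ₗ[K] g
  skew : ∀ x y, bracket x y = - bracket y x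
  phi_bracket : ∀ x y, phi (bracket x y) = bracket (phi x) (phi y)
  jacobi : ∀ x y z,
    bracket (phi x) (bracket y z) + bracket (phi y) (bracket z x)
      + bracket (phi z) (bracket x y) = 0

variable {K g V : Type*} [Field K] [AddCommGroup g] [Module K g]
  [AddCommGroup V] [Module K V]

/-- `ρ` is a representation of the Hom-Lie algebra `L` on `V` with respect to `β`. -/
def HomLieAlgebra.IsRep (L : HomLieAlgebra K g) (β : V ≃ₗ[K] V)
    (ρ : g →ₗ[K] V →ₗ[K] V) : Prop :=
  (∀ x u, ρ (L.phi x) (β u) = β (ρ x u)) ∧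
  (∀ x y u, ρ (L.bracket x y) (β u) = ρ (L.phi x) (ρ y u) - ρ (L.phi y) (ρ x u))

/-- The `s`-twisted dual representation `ρ⋆_s(x)(ξ) = ρ*(φˢ(x))((β⁻²)*(ξ))`, i.e.
`⟨ρ⋆_s(x)ξ, u⟩ = −⟨ξ, β⁻²(ρ(φˢ(x))(u))⟩`. -/
def dualRepS (L : HomLieAlgebra K g) (β : V ≃ₗ[K] V) (ρ : g →ₗ[K] V →ₗ[K] V)
    (s : ℤ) (x : g) (ξ : Dual K V) : Dual K V :=
  - (ξ ∘ₗ β.symm.toLinearMap ∘ₗ β.symm.toLinearMap ∘ₗ ρ ((L.phi ^ s) x))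


private lemma phi_zpow_comm (L : HomLieAlgebra K g) (s : ℤ) (x : g) :
    (L.phi ^ s) (L.phi x) = L.phi ((L.phi ^ s) x) := by
  have h : (L.phi ^ s * L.phi) x = (L.phi * L.phi ^ s) x := by
    rw [← zpow_add_one, ← zpow_one_add, add_comm]
  exact h

private lemma phi_zpow_bracket' (L : HomLieAlgebra K g) (n : ℤ) :
    ∀ x y : g, (L.phi ^ n) (L.bracket x y) = L.bracket ((L.phi ^ n) x) ((L.phi ^ n) y) := by
  have hinv : ∀ a b : g, L.phi.symm (L.bracket a b)
      = L.bracket (L.phi.symm a) (L.phi.symm b) := by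
    intro a b
    apply L.phi.injective
    rw [L.phi_bracket, L.phi.apply_symm_apply, L.phi.apply_symm_apply,
      L.phi.apply_symm_apply]
  induction n using Int.induction_on with
  | zero => simp
  | succ k ih =>
      intro x y
      have hstep : ∀ z : g, (L.phi ^ ((k : ℤ) + 1)) z = L.phi ((L.phi ^ (k : ℤ)) z) := by
        intro z
        have h : (L.phi ^ ((k : ℤ) + 1)) z = (L.phi * L.phi ^ (k : ℤ)) z := by
          rw [add_comm, zpow_one_add]
        exact h
      rw [hstep, hstep, hstep, ih, L.phi_bracket]
  | pred k ih =>
      intro x y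
      have hstep : ∀ z : g, (L.phi ^ (-(k : ℤ) - 1)) z
          = (L.phi ^ (-(k : ℤ))) (L.phi.symm z) := by
        intro z
        have h : (L.phi ^ (-(k : ℤ) - 1)) z = (L.phi ^ (-(k : ℤ)) * (L.phi)⁻¹) z := by
          rw [← zpow_sub_one]
        exact h
      rw [hstep, hstep, hstep, hinv, ih]

private lemma phi_zpow_bracket (L : HomLieAlgebra K g) (n : ℤ) (x y : g) :
    (L.phi ^ n) (L.bracket x y) = L.bracket ((L.phi ^ n) x) ((L.phi ^ n) y) :=
  phi_zpow_bracket' L n x y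

/-- for any integer `s`, `ρ⋆_s` is a representation of `g` on `V*` with
respect to `(β⁻¹)*`, where `(β⁻¹)* ξ = ξ ∘ β⁻¹`. -/
theorem dualRepS_isRep (L : HomLieAlgebra K g) (β : V ≃ₗ[K] V)
    (ρ : g →ₗ[K] V →ₗ[K] V) (hρ : L.IsRep β ρ) (s : ℤ) :
    (∀ (x : g) (ξ : Dual K V),
      dualRepS L β ρ s (L.phi x) (ξ ∘ₗ β.symm.toLinearMap)
        = (dualRepS L β ρ s x ξ) ∘ₗ β.symm.toLinearMap) ∧
    (∀ (x y : g) (ξ : Dual K V),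
      dualRepS L β ρ s (L.bracket x y) (ξ ∘ₗ β.symm.toLinearMap)
        = dualRepS L β ρ s (L.phi x) (dualRepS L β ρ s y ξ)
          - dualRepS L β ρ s (L.phi y) (dualRepS L β ρ s x ξ)) := by
  obtain ⟨h1, h2⟩ := hρ
  have hA : ∀ (z : g) (v : V), ρ (L.phi z) v = β (ρ z (β.symm v)) := by
    intro z v
    have := h1 z (β.symm v)
    rwa [β.apply_symm_apply] at this
  have hA' : ∀ (z : g) (v : V), ρ z (β.symm v) = β.symm (ρ (L.phi z) v) := by
    intro z v
    rw [hA, β.symm_apply_apply]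
  have h2' : ∀ (a b : g) (u : V), ρ (L.bracket a b) u
      = ρ (L.phi a) (ρ b (β.symm u)) - ρ (L.phi b) (ρ a (β.symm u)) := by
    intro a b u
    have := h2 a b (β.symm u)
    rwa [β.apply_symm_apply] at this
  constructor
  · intro x ξ
    ext u
    simp only [dualRepS, LinearMap.neg_apply, LinearMap.comp_apply, LinearEquiv.coe_coe]
    rw [phi_zpow_comm, hA, β.symm_apply_apply]
  · intro x y ξ
    ext u
    simp only [dualRepS, LinearMap.neg_apply, LinearMap.comp_apply, LinearEquiv.coe_coe,
      LinearMap.sub_apply, map_neg, neg_neg]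
    rw [phi_zpow_bracket, h2', phi_zpow_comm, phi_zpow_comm]
    simp only [hA, β.symm_apply_apply, map_sub, map_neg]
    ring
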